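/- Let K be a set of symmetric n×n matrices closed under the maps X ↦ Diag(h)·X·Diag(h) for all h ∈ ℝ₊ⁿ. If X̂ is an optimal solution of max{𝟙ᵀX𝟙 : tr(X)=1, X ∈ K, X ⪰ 0}, then diag(X̂) = μ·X̂𝟙 for some μ > 0. -/

import Mathlib

open Matrix

private lemma entry_DXD {n : ℕ} (X : Matrix (Fin n) (Fin n) ℝ) (h : Fin n → ℝ) (j k : Fin n) :
    (diagonal h * X * diagonal h) j k = h j * X j k * h k := by
  simp [Matrix.mul_diagonal, Matrix.diagonal_mul, mul_comm, mul_assoc]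

private lemma psd_DXD {n : ℕ} {X : Matrix (Fin n) (Fin n) ℝ} (hX : X.PosSemidef)
    (h : Fin n → ℝ) : (diagonal h * X * diagonal h).PosSemidef := by
  have h1 : (diagonal h)ᴴ = diagonal h := by simp [diagonal_conjTranspose]
  have h2 := hX.mul_mul_conjTranspose_same (diagonal h)
  rwa [h1] at h2

private lemma quad_sum {n : ℕ} (X : Matrix (Fin n) (Fin n) ℝ) (hX : X.IsSymm) (t c : ℝ)
    (i : Fin n) :
    ∑ j, ∑ k, ((1 + t * (if j = i then 1 else 0)) * c) * X j k * ((1 + t * (if k = i then 1 else 0)) * c)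
    = c^2 * ((∑ j, ∑ k, X j k) + 2*t*(∑ k, X i k) + t^2 * X i i) := by
  have hsymm : ∀ k, X k i = X i k := fun k => hX.apply i k
  have expand : ∀ j k, ((1 + t * (if j = i then 1 else 0)) * c) * X j k * ((1 + t * (if k = i then 1 else 0)) * c)
      = c^2 * (X j k + t * ((if j = i then 1 else 0) * X j k) + t * ((if k = i then 1 else 0) * X j k)
        + t^2 * ((if j = i then 1 else 0) * ((if k = i then 1 else 0) * X j k))) := by
    intro j k; by_cases hj : j = i <;> by_cases hk : k = i <;> simp [hj, hk] <;> ring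
  simp only [expand]
  simp only [Finset.mul_sum, Finset.sum_add_distrib, ← Finset.mul_sum, ite_mul, zero_mul, one_mul,
    Finset.sum_ite_eq']
  simp only [Finset.mem_univ, if_true, ← Finset.sum_mul, ← Finset.mul_sum]
  have h1 : ∑ j, X j i = ∑ k, X i k := by simp [hsymm]
  have h2 : (∑ j, ∑ k, if j = i then X j k else 0) = ∑ k, X i k := by
    rw [Finset.sum_comm]; simp [Finset.sum_ite_eq']
  have h3 : (∑ j, ∑ k, if j = i then (if k = i then X j k else 0) else 0) = X i i := by
    rw [Finset.sum_comm]; simp [Finset.sum_ite_eq']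
  rw [h1, h2, h3]; ring

private lemma quad_trace {n : ℕ} (X : Matrix (Fin n) (Fin n) ℝ) (t c : ℝ) (i : Fin n) :
    ∑ j, ((1 + t * (if j = i then 1 else 0)) * c) * X j j * ((1 + t * (if j = i then 1 else 0)) * c)
    = c^2 * ((∑ j, X j j) + (2*t + t^2) * X i i) := by
  have expand : ∀ j, ((1 + t * (if j = i then 1 else 0)) * c) * X j j * ((1 + t * (if j = i then 1 else 0)) * c)
      = c^2 * (X j j + (2*t + t^2) * (if j = i then X j j else 0)) := by
    intro j; by_cases hj : j = i <;> simp [hj] <;> ring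
  simp only [expand]
  rw [← Finset.mul_sum, Finset.sum_add_distrib, ← Finset.mul_sum,
    Finset.sum_ite_eq' Finset.univ i (fun j => X j j)]
  simp

/-- Gijswijt's lemma: if `K` is a set of symmetric matrices closed under the maps
`X ↦ Diag(h) X Diag(h)` for `h ≥ 0`, and `X̂` is optimal for
`max {𝟙ᵀX𝟙 : tr X = 1, X ∈ K, X ⪰ 0}`, then `diag(X̂) = μ X̂𝟙` for some `μ > 0`. -/
theorem diag_eq_mul_rowSums_of_optimal (n : ℕ)
    (K : Set (Matrix (Fin n) (Fin n) ℝ))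
    (hKsymm : ∀ X ∈ K, X.IsSymm)
    (hK : ∀ X ∈ K, ∀ h : Fin n → ℝ, (∀ i, 0 ≤ h i) →
      diagonal h * X * diagonal h ∈ K)
    (Xh : Matrix (Fin n) (Fin n) ℝ)
    (hXK : Xh ∈ K) (hXpsd : Xh.PosSemidef) (hXtr : Xh.trace = 1)
    (hopt : ∀ X ∈ K, X.PosSemidef → X.trace = 1 →
      ∑ i, ∑ j, X i j ≤ ∑ i, ∑ j, Xh i j) :
    ∃ μ : ℝ, 0 < μ ∧ ∀ i, Xh i i = μ * ∑ j, Xh i j := by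
  have hsym : Xh.IsSymm := hKsymm Xh hXK
  set S : ℝ := ∑ i, ∑ j, Xh i j with hSdef
  have htr : ∑ j, Xh j j = 1 := by
    have : Xh.trace = ∑ j, Xh j j := rfl
    linarith [hXtr, this.symm.trans hXtr]
  have hdiag : ∀ i, 0 ≤ Xh i i := by
    intro i
    exact hXpsd.diag_nonneg
  have hdle : ∀ i, Xh i i ≤ 1 := by
    intro i
    calc Xh i i ≤ ∑ j, Xh j j := Finset.single_le_sum (fun j _ => hdiag j) (Finset.mem_univ i)
    _ = 1 := htr
  -- Step 1 : 1 ≤ S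
  have hS1 : 1 ≤ S := by
    obtain ⟨i0, hi0⟩ : ∃ i0, 0 < Xh i0 i0 := by
      by_contra hcon
      push_neg at hcon
      have : ∀ i, Xh i i = 0 := fun i => le_antisymm (hcon i) (hdiag i)
      simp [this] at htr
    set h0 : Fin n → ℝ := fun j => if j = i0 then (Real.sqrt (Xh i0 i0))⁻¹ else 0 with hh0def
    have hh0 : ∀ j, 0 ≤ h0 j := by
      intro j; simp only [hh0def]; split <;> positivity
    set Z := diagonal h0 * Xh * diagonal h0 with hZdef
    have hZK : Z ∈ K := hK Xh hXK h0 hh0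
    have hZpsd : Z.PosSemidef := psd_DXD hXpsd h0
    have hsq : (Real.sqrt (Xh i0 i0))⁻¹ * Xh i0 i0 * (Real.sqrt (Xh i0 i0))⁻¹ = 1 := by
      rw [mul_comm, ← mul_assoc, ← sq, ← Real.sqrt_inv, Real.sq_sqrt (by positivity)]
      field_simp
    have hZentry : ∀ j k, Z j k = h0 j * Xh j k * h0 k := fun j k => entry_DXD Xh h0 j k
    have hZtr : Z.trace = 1 := by
      show ∑ j, Z j j = 1
      simp only [hZentry, hh0def]
      rw [Finset.sum_eq_single i0]
      · simpa using hsq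
      · intro j _ hj; simp [hj]
      · simp
    have hZsum : ∑ j, ∑ k, Z j k = 1 := by
      simp only [hZentry, hh0def]
      rw [Finset.sum_eq_single i0]
      · rw [Finset.sum_eq_single i0]
        · simpa using hsq
        · intro k _ hk; simp [hk]
        · simp
      · intro j _ hj; simp [hj]
      · simp
    have := hopt Z hZK hZpsd hZtr
    rw [hZsum] at this
    exact this
  have hSpos : 0 < S := lt_of_lt_of_le one_pos hS1
  -- Step 2 : for each i, ∑ j, Xh i j = S * Xh i i
  have key : ∀ i : Fin n, (∑ j, Xh i j) = S * Xh i i := by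
    intro i
    set r : ℝ := ∑ j, Xh i j with hrdef
    set d : ℝ := Xh i i with hddef
    -- the variational inequality
    have ineq : ∀ t : ℝ, |t| ≤ 1/2 →
        2*t*(r - S * d) + t^2*(d - S * d) ≤ 0 := by
      intro t ht
      have ht1 : -(1/2) ≤ t := neg_le_of_abs_le ht
      have ht2 : t ≤ 1/2 := le_of_abs_le ht
      set T : ℝ := 1 + (2*t + t^2) * d with hTdef
      have hd0 : 0 ≤ d := hdiag i
      have hd1 : d ≤ 1 := hdle i
      have hTpos : 0 < T := by
        rw [hTdef]
        nlinarith [mul_nonneg (mul_nonneg (by linarith : (0:ℝ) ≤ t + 1/2)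
          (by linarith : (0:ℝ) ≤ t + 3/2)) hd0]
      set c : ℝ := (Real.sqrt T)⁻¹ with hcdef
      have hcpos : 0 < c := by positivity
      have hc2 : c^2 = T⁻¹ := by
        rw [hcdef, ← Real.sqrt_inv, Real.sq_sqrt (by positivity)]
      set h : Fin n → ℝ := fun j => (1 + t * (if j = i then 1 else 0)) * c with hhdef
      have hh : ∀ j, 0 ≤ h j := by
        intro j; simp only [hhdef]
        have : (0:ℝ) ≤ 1 + t * (if j = i then 1 else 0) := by split <;> nlinarith
        positivity
      set Y := diagonal h * Xh * diagonal h with hYdef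
      have hYK : Y ∈ K := hK Xh hXK h hh
      have hYpsd : Y.PosSemidef := psd_DXD hXpsd h
      have hYentry : ∀ j k, Y j k = h j * Xh j k * h k := fun j k => entry_DXD Xh h j k
      have hYtr : Y.trace = 1 := by
        show ∑ j, Y j j = 1
        simp only [hYentry, hhdef]
        rw [quad_trace Xh t c i, htr, hc2, ← hTdef]
        field_simp
      have hYsum : ∑ j, ∑ k, Y j k = T⁻¹ * (S + 2*t*r + t^2 * d) := by
        simp only [hYentry, hhdef]
        rw [quad_sum Xh hsym t c i, hc2, ← hSdef, ← hrdef, ← hddef]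
      have hle := hopt Y hYK hYpsd hYtr
      rw [hYsum] at hle
      have : S + 2*t*r + t^2 * d ≤ S * T := by
        rw [inv_mul_le_iff₀ hTpos] at hle
        linarith [hle]
      rw [hTdef] at this
      nlinarith [this]
    -- conclude r = S * d from the two-sided inequality
    set a : ℝ := r - S * d with hadef
    set b : ℝ := d - S * d with hbdef
    have ha : a = 0 := by
      by_contra ha
      have habs : 0 < |a| := abs_pos.mpr ha
      set δ : ℝ := min (1/2) (|a| / (|b| + 1)) with hδdef
      have hδpos : 0 < δ := by
        apply lt_min (by norm_num); positivity
      have hδhalf : δ ≤ 1/2 := min_le_left _ _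
      have hδa : δ * (|b| + 1) ≤ |a| := by
        rw [← le_div_iff₀ (by positivity)]
        exact min_le_right _ _
      rcases lt_or_gt_of_ne ha with hneg | hpos
      · -- a < 0, take t = -δ
        have h1 := ineq (-δ) (by rw [abs_neg, abs_of_pos hδpos]; exact hδhalf)
        have hb1 : b ≤ |b| := le_abs_self b
        have hb2 : -|b| ≤ b := neg_abs_le b
        have haa : |a| = -a := abs_of_neg hneg
        nlinarith [h1, hδpos, sq_nonneg δ]
      · -- a > 0, take t = δ
        have h1 := ineq δ (by rw [abs_of_pos hδpos]; exact hδhalf)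
        have hb1 : b ≤ |b| := le_abs_self b
        have hb2 : -|b| ≤ b := neg_abs_le b
        have haa : |a| = a := abs_of_pos hpos
        nlinarith [h1, hδpos, sq_nonneg δ]
    have : r = S * d := by rw [hadef] at ha; linarith
    exact this
  refine ⟨S⁻¹, by positivity, fun i => ?_⟩
  rw [key i, ← mul_assoc, inv_mul_cancel₀ (ne_of_gt hSpos), one_mul]
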